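/- Let p be a prime, and for a message m = (a_1,...,a_ν) ∈ Z_p^ν with ν ≤ l define f(m, k_1) = k_1^{ν+1} + a_1·k_1^ν + ... + a_ν·k_1 in Z_p. For any two distinct messages b ≠ a (possibly of different lengths ≤ l) and any t_0, t_1 ∈ Z_p, the number of k_1 ∈ Z_p such that f(b,k_1) − f(a,k_1) = t_1 − t_0 is at most l+1. -/
import Mathlib


/-- `f(m, k) = k^{ν+1} + m_1 k^ν + ... + m_ν k` for a message `m` of length `ν`
over `Z_p`. -/
def macF {p : ℕ} (m : List (ZMod p)) (k : ZMod p) : ZMod p :=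
  k ^ (m.length + 1) + ∑ i : Fin m.length, m.get i * k ^ (m.length - i.val)


open Polynomial


noncomputable def polyF {p : ℕ} (m : List (ZMod p)) : Polynomial (ZMod p) :=
  X ^ (m.length + 1) + ∑ i : Fin m.length, C (m.get i) * X ^ (m.length - i.val)

lemma polyF_eval {p : ℕ} (m : List (ZMod p)) (k : ZMod p) :
    (polyF m).eval k = macF m k := by
  simp [polyF, macF, eval_finset_sum]

lemma polyF_coeff {p : ℕ} (m : List (ZMod p)) (d : ℕ) :
    (polyF m).coeff d = (if m.length + 1 = d then 1 else 0)
      + ∑ i : Fin m.length, if m.length - i.val = d then m.get i else 0 := by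
  simp only [polyF, coeff_add, finset_sum_coeff, coeff_X_pow, coeff_C_mul,
    mul_ite, mul_one, mul_zero]
  congr 1
  · simp [eq_comm]
  · exact Finset.sum_congr rfl fun i _ => by simp [eq_comm]

lemma polyF_natDegree_le {p : ℕ} (m : List (ZMod p)) :
    (polyF m).natDegree ≤ m.length + 1 := by
  apply Polynomial.natDegree_add_le_of_degree_le
  · simpa using Polynomial.natDegree_X_pow_le _
  · apply Polynomial.natDegree_sum_le_of_forall_le
    intro i _
    apply le_trans (Polynomial.natDegree_C_mul_le _ _)
    simpa using le_trans (Polynomial.natDegree_X_pow_le _) (by omega)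

lemma coeff_case_lt {p : ℕ} (c : ZMod p) (a b : List (ZMod p))
    (h : a.length < b.length) :
    (polyF b - polyF a - C c).coeff (b.length + 1) = 1 := by
  have hb : (polyF b).coeff (b.length + 1) = 1 := by
    rw [polyF_coeff]
    rw [if_pos rfl, Finset.sum_eq_zero, add_zero]
    intro i _
    rw [if_neg]; omega
  have ha : (polyF a).coeff (b.length + 1) = 0 := by
    rw [polyF_coeff]
    rw [if_neg (by omega), Finset.sum_eq_zero, add_zero]
    intro i _
    rw [if_neg]; omega
  simp [coeff_sub, hb, ha, coeff_C, Nat.succ_ne_zero]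

lemma coeff_case_eq {p : ℕ} (c : ZMod p) (a b : List (ZMod p))
    (h : a.length = b.length) (j : Fin b.length) :
    (polyF b - polyF a - C c).coeff (b.length - j.val)
      = b.get j - a.get (Fin.cast h.symm j) := by
  have hj := j.isLt
  have hone : b.length - j.val ≠ 0 := by omega
  have hb : (polyF b).coeff (b.length - j.val) = b.get j := by
    rw [polyF_coeff, if_neg (by omega), zero_add]
    rw [Finset.sum_eq_single j]
    · simp
    · intro i _ hij
      rw [if_neg]
      intro hEq
      exact hij (Fin.ext (by omega))
    · simp
  have ha : (polyF a).coeff (b.length - j.val) = a.get (Fin.cast h.symm j) := by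
    rw [polyF_coeff, if_neg (by omega), zero_add]
    rw [Finset.sum_eq_single (Fin.cast h.symm j)]
    · rw [if_pos (by simp; omega)]
    · intro i _ hij
      rw [if_neg]
      intro hEq
      apply hij; apply Fin.ext
      simp only [Fin.coe_cast]
      have := i.isLt
      omega
    · simp
  rw [coeff_sub, coeff_sub, hb, ha, coeff_C, if_neg hone, sub_zero]

lemma polyDiff_ne_zero {p : ℕ} (hp1 : 1 < p) (c : ZMod p) (a b : List (ZMod p))
    (hab : a ≠ b) : polyF b - polyF a - C c ≠ 0 := by
  haveI : Fact (1 < p) := ⟨hp1⟩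
  rcases lt_trichotomy a.length b.length with h | h | h
  · intro h0
    have := coeff_case_lt c a b h
    rw [h0] at this
    simp at this
  · -- equal lengths: find differing index
    have : ∃ j : Fin b.length, b.get j ≠ a.get (Fin.cast h.symm j) := by
      by_contra hno
      push_neg at hno
      apply hab
      apply List.ext_get h
      intro n h1 h2
      have := hno ⟨n, h2⟩
      simpa using this.symm
    obtain ⟨j, hj⟩ := this
    intro h0
    have hc := coeff_case_eq c a b h j
    rw [h0, coeff_zero] at hc
    exact hj (sub_eq_zero.mp hc.symm)
  · intro h0
    have h0' : polyF a - polyF b - C (-c) = 0 := by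
      have heq : polyF a - polyF b - C (-c) = -(polyF b - polyF a - C c) := by
        rw [map_neg]; ring
      rw [heq, h0, neg_zero]
    have := coeff_case_lt (-c) b a h
    rw [h0'] at this
    simp at this


/-- For distinct nonempty messages `a ≠ b` of lengths at most `l`
over `Z_p` (`p` prime) and any tags `t_0, t_1`, the number of `k_1 ∈ Z_p` with
`f(b,k_1) − f(a,k_1) = t_1 − t_0` is at most `l + 1`. -/
theorem stmt_6 (p : ℕ) (hp : p.Prime) (l : ℕ)
    (a b : List (ZMod p)) (ha : a ≠ []) (hb : b ≠ [])
    (hal : a.length ≤ l) (hbl : b.length ≤ l) (hab : a ≠ b)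
    (t₀ t₁ : ZMod p) :
    haveI : Fact p.Prime := ⟨hp⟩
    ((Finset.univ.filter fun k₁ : ZMod p =>
        macF b k₁ - macF a k₁ = t₁ - t₀)).card ≤ l + 1 := by
  haveI : Fact p.Prime := ⟨hp⟩
  set P : Polynomial (ZMod p) := polyF b - polyF a - C (t₁ - t₀) with hPdef
  have hP : P ≠ 0 := polyDiff_ne_zero hp.one_lt (t₁ - t₀) a b hab
  have hdeg : P.natDegree ≤ l + 1 := by
    refine le_trans (Polynomial.natDegree_sub_le _ _) ?_
    rw [max_le_iff]
    constructor
    · refine le_trans (Polynomial.natDegree_sub_le _ _) ?_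
      rw [max_le_iff]
      exact ⟨le_trans (polyF_natDegree_le b) (by omega),
        le_trans (polyF_natDegree_le a) (by omega)⟩
    · simp
  have hsub : (Finset.univ.filter fun k₁ : ZMod p =>
      macF b k₁ - macF a k₁ = t₁ - t₀) ⊆ P.roots.toFinset := by
    intro k hk
    rw [Finset.mem_filter] at hk
    rw [Multiset.mem_toFinset, Polynomial.mem_roots hP]
    simp only [Polynomial.IsRoot, hPdef, Polynomial.eval_sub, Polynomial.eval_C,
      polyF_eval]
    rw [hk.2]; ring
  calc _ ≤ P.roots.toFinset.card := Finset.card_le_card hsub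
    _ ≤ Multiset.card P.roots := Multiset.toFinset_card_le _
    _ ≤ P.natDegree := P.card_roots' 
    _ ≤ l + 1 := hdeg
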